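/- For every even integer m ≥ 2 and every x ∈ ℤ₂, the iterates of T_m converge to 1: lim_{k→∞} T_m^{∘k}(x) = 1 in the 2-adic topology. -/

import Mathlib

open Polynomial Polynomial.Chebyshev

private lemma T_zmod2 (n : ℤ) : T (ZMod 2) n = if Even n then 1 else X := by
  have h2 : (2 : (ZMod 2)[X]) = 0 := by
    exact_mod_cast CharP.cast_eq_zero ((ZMod 2)[X]) 2
  induction n using Polynomial.Chebyshev.induct with
  | zero => simp
  | one => simp [Int.not_even_one]
  | add_two n ih1 ih2 =>
    rw [T_add_two, h2, ih1, ih2]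
    by_cases h : Even (n : ℤ)
    · simp [Int.even_add_one, Int.even_add, h]
      exact CharTwo.neg_eq 1
    · simp [Int.even_add_one, Int.even_add, h]
      exact CharTwo.neg_eq X
  | neg_add_one n ih1 ih2 =>
    have h1 : T (ZMod 2) (-(n : ℤ) - 1) = 2 * X * T (ZMod 2) (-n) - T (ZMod 2) (-n + 1) :=
      T_sub_one (ZMod 2) (-n)
    rw [h1, h2, ih2]
    by_cases h : Even (n : ℤ)
    · simp [Int.even_add_one, Int.even_sub, Int.even_add, h]
      exact CharTwo.neg_eq _
    · simp [Int.even_add_one, Int.even_sub, Int.even_add, h]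
      exact CharTwo.neg_eq _

private lemma T_eval_one (n : ℤ) : (T ℤ_[2] n).eval 1 = 1 := by
  induction n using Polynomial.Chebyshev.induct with
  | zero => simp
  | one => simp
  | add_two n ih1 ih2 => rw [T_add_two]; simp [ih1, ih2]; ring
  | neg_add_one n ih1 ih2 =>
    have h1 : T ℤ_[2] (-(n : ℤ) - 1) = 2 * X * T ℤ_[2] (-n) - T ℤ_[2] (-n + 1) :=
      T_sub_one ℤ_[2] (-n)
    have ih1' : (T ℤ_[2] ((n : ℤ))).eval 1 = 1 := by rwa [T_neg] at ih1
    rw [h1]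
    simp [ih1', ih2]
    norm_num

private lemma norm_le_half {z : ℤ_[2]} (h : (2 : ℤ_[2]) ∣ z) : ‖z‖ ≤ 2⁻¹ := by
  obtain ⟨w, rfl⟩ := h
  rw [norm_mul]
  have h2 : ‖(2 : ℤ_[2])‖ = 2⁻¹ := by
    have := @PadicInt.norm_p 2 _
    simpa using this
  calc ‖(2:ℤ_[2])‖ * ‖w‖ ≤ ‖(2:ℤ_[2])‖ * 1 := by
        exact mul_le_mul_of_nonneg_left (PadicInt.norm_le_one w) (norm_nonneg _)
    _ = 2⁻¹ := by rw [h2, mul_one]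

private lemma key_contraction {n : ℤ} (hn : Even n) (y : ℤ_[2]) :
    ‖(T ℤ_[2] n).eval y - 1‖ ≤ 2⁻¹ * ‖y - 1‖ := by
  set Q : ℤ_[2][X] := (T ℤ_[2] n).comp (X + C 1) with hQdef
  -- the image of Q mod 2 is 1
  have hQmap : Q.map (PadicInt.toZMod) = 1 := by
    rw [hQdef, Polynomial.map_comp, Polynomial.Chebyshev.map_T, T_zmod2, if_pos hn,
      Polynomial.one_comp]
  -- hence all coefficients of Q in degree ≥ 1 are divisible by 2
  have hcoeff : ∀ i : ℕ, (2 : ℤ_[2]) ∣ Q.coeff (i + 1) := by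
    intro i
    have h0 : PadicInt.toZMod (Q.coeff (i + 1)) = 0 := by
      have := congrArg (fun P => Polynomial.coeff P (i + 1)) hQmap
      simpa [Polynomial.coeff_map, Polynomial.coeff_one] using this
    have hker : Q.coeff (i + 1) ∈ RingHom.ker (PadicInt.toZMod : ℤ_[2] →+* ZMod 2) := h0
    rw [PadicInt.ker_toZMod, PadicInt.maximalIdeal_eq_span_p, Ideal.mem_span_singleton] at hker
    exact_mod_cast hker
  have hQ0 : Q.coeff 0 = 1 := by
    rw [Polynomial.coeff_zero_eq_eval_zero, hQdef, Polynomial.eval_comp]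
    simpa using T_eval_one n
  have hQeval : Q.eval (y - 1) = (T ℤ_[2] n).eval y := by
    rw [hQdef, Polynomial.eval_comp]
    simp
  have hy1 : ‖y - 1‖ ≤ 1 := PadicInt.norm_le_one _
  rw [← hQeval]
  rw [Polynomial.eval_eq_sum_range, Finset.sum_range_succ'] at *
  simp only [pow_zero, mul_one, hQ0]
  rw [add_sub_cancel_right]
  apply IsUltrametricDist.norm_sum_le_of_forall_le_of_nonneg
  · positivity
  · intro i _
    rw [norm_mul, norm_pow, pow_succ']
    calc ‖Q.coeff (i + 1)‖ * (‖y - 1‖ * ‖y - 1‖ ^ i)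
        ≤ 2⁻¹ * (‖y - 1‖ * 1) := by
          apply mul_le_mul (norm_le_half (hcoeff i))
          · exact mul_le_mul_of_nonneg_left (pow_le_one₀ (norm_nonneg _) hy1) (norm_nonneg _)
          · positivity
          · norm_num
      _ = 2⁻¹ * ‖y - 1‖ := by ring

theorem chebyshev_even_iterates_tendsto_one (m : ℕ) (hm : 2 ≤ m) (heven : Even m) (x : ℤ_[2]) :
    Filter.Tendsto (fun k => (fun y => (Polynomial.Chebyshev.T ℤ_[2] m).eval y)^[k] x)
      Filter.atTop (nhds 1) := by
  have hmz : Even (m : ℤ) := Int.even_coe_nat m |>.mpr heven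
  set f : ℤ_[2] → ℤ_[2] := fun y => (T ℤ_[2] (m : ℤ)).eval y with hf
  have hbound : ∀ k : ℕ, ‖f^[k] x - 1‖ ≤ 2⁻¹ ^ k * ‖x - 1‖ := by
    intro k
    induction k with
    | zero => simp
    | succ k ih =>
      rw [Function.iterate_succ_apply']
      calc ‖f (f^[k] x) - 1‖ ≤ 2⁻¹ * ‖f^[k] x - 1‖ := key_contraction hmz _
        _ ≤ 2⁻¹ * (2⁻¹ ^ k * ‖x - 1‖) := by
            exact mul_le_mul_of_nonneg_left ih (by norm_num)
        _ = 2⁻¹ ^ (k + 1) * ‖x - 1‖ := by ring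
  rw [tendsto_iff_norm_sub_tendsto_zero]
  apply squeeze_zero (fun k => norm_nonneg _) hbound
  have h0 : Filter.Tendsto (fun k : ℕ => (2⁻¹ : ℝ) ^ k) Filter.atTop (nhds 0) :=
    tendsto_pow_atTop_nhds_zero_of_lt_one (by norm_num) (by norm_num)
  simpa using h0.mul_const ‖x - 1‖
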